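/- Let X be a well-filtered T0 space, {K_i}_{i∈I} a filtered family of nonempty compact saturated sets with ⋂_i K_i = ↑C for an antichain C, and a ∈ C. If the filtered family {↑(↓a ∩ K_i)}_{i∈I} has intersection ↑Ĉ for an antichain Ĉ, then a ∈ Ĉ and Ĉ = {a}. -/
import Mathlib


open Set

/-- The specialization order of the paper: `x ≤ y` iff `x ∈ cl {y}`. -/
def specLE {X : Type*} [TopologicalSpace X] (x y : X) : Prop := x ∈ closure ({y} : Set X)

/-- Upward closure `↑A` w.r.t. the specialization order. -/
def upSet {X : Type*} [TopologicalSpace X] (A : Set X) : Set X := {y | ∃ x ∈ A, specLE x y}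

/-- Downward closure `↓A` w.r.t. the specialization order. -/
def downSet {X : Type*} [TopologicalSpace X] (A : Set X) : Set X := {y | ∃ x ∈ A, specLE y x}

/-- The saturation of a set: the intersection of all open sets containing it. -/
def sat {X : Type*} [TopologicalSpace X] (A : Set X) : Set X := ⋂₀ {U | IsOpen U ∧ A ⊆ U}

/-- A `T0` space is well-filtered if for every filtered family `𝓕` of compact saturated
sets and every open `U` with `⋂₀ 𝓕 ⊆ U`, some member of `𝓕` is contained in `U`. -/
def WellFilteredSpace (X : Type*) [TopologicalSpace X] : Prop :=
  ∀ 𝓕 : Set (Set X), 𝓕.Nonempty →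
    (∀ K ∈ 𝓕, IsCompact K ∧ sat K = K) →
    (∀ K₁ ∈ 𝓕, ∀ K₂ ∈ 𝓕, ∃ K₃ ∈ 𝓕, K₃ ⊆ K₁ ∩ K₂) →
    ∀ U : Set X, IsOpen U → ⋂₀ 𝓕 ⊆ U → ∃ K ∈ 𝓕, K ⊆ U

section Aux
variable {X : Type*} [TopologicalSpace X]

lemma specLE_refl (x : X) : specLE x x := subset_closure rfl

lemma specLE_trans {x y z : X} (h1 : specLE x y) (h2 : specLE y z) : specLE x z := by
  have h : closure ({y} : Set X) ⊆ closure ({z} : Set X) := by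
    have : ({y} : Set X) ⊆ closure ({z} : Set X) := Set.singleton_subset_iff.2 h2
    simpa using closure_mono this
  exact h h1

lemma specLE_antisymm [T0Space X] {x y : X} (h1 : specLE x y) (h2 : specLE y x) : x = y := by
  have hxy : y ⤳ x := specializes_iff_mem_closure.2 h1
  have hyx : x ⤳ y := specializes_iff_mem_closure.2 h2
  exact (hyx.antisymm hxy).eq

lemma mem_upSet_self {A : Set X} {x : X} (hx : x ∈ A) : x ∈ upSet A :=
  ⟨x, hx, specLE_refl x⟩

lemma upSet_mono {A B : Set X} (h : A ⊆ B) : upSet A ⊆ upSet B :=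
  fun _ ⟨x, hx, hle⟩ => ⟨x, h hx, hle⟩

lemma sat_eq_upSet (A : Set X) : sat A = upSet A := by
  ext y
  constructor
  · intro hy
    by_contra hny
    have hA : A ⊆ (closure ({y} : Set X))ᶜ := by
      intro x hx
      intro hxc
      exact hny ⟨x, hx, hxc⟩
    have : y ∈ (closure ({y} : Set X))ᶜ :=
      hy _ ⟨isClosed_closure.isOpen_compl, hA⟩
    exact this (subset_closure rfl)
  · rintro ⟨x, hx, hle⟩ U ⟨hU, hAU⟩
    have hxy : x ∈ closure ({y} : Set X) := hle
    rcases mem_closure_iff.1 hxy U hU (hAU hx) with ⟨z, hzU, hz⟩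
    rwa [← hz]

lemma upSet_idem (A : Set X) : upSet (upSet A) = upSet A := by
  apply Set.Subset.antisymm
  · rintro y ⟨x, ⟨x', hx', hle'⟩, hle⟩
    exact ⟨x', hx', specLE_trans hle' hle⟩
  · exact fun y hy => mem_upSet_self hy

lemma downSet_singleton (a : X) : downSet ({a} : Set X) = closure ({a} : Set X) := by
  ext y
  constructor
  · rintro ⟨x, rfl, h⟩; exact h
  · intro h; exact ⟨a, rfl, h⟩

lemma IsCompact.upSet' {A : Set X} (hA : IsCompact A) : IsCompact (upSet A) := by
  rw [isCompact_iff_finite_subcover] at hA ⊢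
  intro ι U hU hcov
  rcases hA U hU (fun x hx => hcov (mem_upSet_self hx)) with ⟨t, ht⟩
  refine ⟨t, ?_⟩
  have hopen : IsOpen (⋃ i ∈ t, U i) := isOpen_biUnion fun i _ => hU i
  have : upSet A = sat A := (sat_eq_upSet A).symm
  rw [this]
  exact fun y hy => hy _ ⟨hopen, ht⟩
end Aux

theorem stmt18 {X : Type*} [TopologicalSpace X] [T0Space X]
    (hwf : WellFilteredSpace X) {ι : Type*} [Nonempty ι] (K : ι → Set X)
    (hne : ∀ i, (K i).Nonempty) (hc : ∀ i, IsCompact (K i)) (hs : ∀ i, sat (K i) = K i)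
    (hfil : ∀ i j : ι, ∃ k : ι, K k ⊆ K i ∩ K j)
    (C : Set X) (hCanti : IsAntichain specLE C) (hC : ⋂ i, K i = upSet C)
    (a : X) (ha : a ∈ C)
    (Chat : Set X) (hChatAnti : IsAntichain specLE Chat)
    (hChat : ⋂ i, upSet (downSet {a} ∩ K i) = upSet Chat) :
    a ∈ Chat ∧ Chat = {a} := by
  set Q : ι → Set X := fun i => upSet (downSet {a} ∩ K i) with hQ
  -- K is upward closed
  have hKup : ∀ i, ∀ x ∈ K i, ∀ y, specLE x y → y ∈ K i := by
    intro i x hx y hxy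
    have : y ∈ upSet (K i) := ⟨x, hx, hxy⟩
    rwa [← sat_eq_upSet, hs i] at this
  -- a belongs to every K i
  have haK : ∀ i, a ∈ K i := by
    intro i
    have : a ∈ upSet C := mem_upSet_self ha
    rw [← hC] at this
    exact Set.mem_iInter.1 this i
  -- a belongs to every Q i
  have haQ : ∀ i, a ∈ Q i :=
    fun i => mem_upSet_self ⟨⟨a, rfl, specLE_refl a⟩, haK i⟩
  -- hence a ∈ upSet Chat
  have haUp : a ∈ upSet Chat := by
    rw [← hChat]; exact Set.mem_iInter.2 haQ
  obtain ⟨c, hcChat, hca⟩ := haUp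
  -- c ∈ every K i
  have hcK : ∀ i, c ∈ K i := by
    intro i
    have hcQ : c ∈ Q i := by
      have : c ∈ upSet Chat := mem_upSet_self hcChat
      rw [← hChat] at this
      exact Set.mem_iInter.1 this i
    obtain ⟨x, ⟨hxd, hxK⟩, hxc⟩ := hcQ
    exact hKup i x hxK c hxc
  -- c ∈ upSet C, so some c₀ ∈ C below c
  have hcC : c ∈ upSet C := by rw [← hC]; exact Set.mem_iInter.2 hcK
  obtain ⟨c₀, hc₀C, hc₀c⟩ := hcC
  have hc₀a : specLE c₀ a := specLE_trans hc₀c hca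
  have hc₀eq : c₀ = a := by
    by_contra hne'
    exact hCanti hc₀C ha hne' hc₀a
  have hac : specLE a c := hc₀eq ▸ hc₀c
  have hceq : c = a := specLE_antisymm hca hac
  have haChat : a ∈ Chat := hceq ▸ hcChat
  refine ⟨haChat, ?_⟩
  -- Chat = {a}
  apply Set.Subset.antisymm
  · intro a' ha'Chat
    by_contra hne'
    have hne'' : a' ≠ a := hne'
    -- apply well-filteredness
    set U : Set X := (closure ({a} : Set X) ∩ closure ({a'} : Set X))ᶜ with hUdef
    have hUopen : IsOpen U := (isClosed_closure.inter isClosed_closure).isOpen_compl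
    have hQcs : ∀ S ∈ Set.range Q, IsCompact S ∧ sat S = S := by
      rintro S ⟨i, rfl⟩
      constructor
      · apply IsCompact.upSet'
        have hclosed : IsClosed (downSet ({a} : Set X)) := by
          rw [downSet_singleton]; exact isClosed_closure
        exact (hc i).inter_left hclosed
      · rw [sat_eq_upSet, hQ, upSet_idem]
    have hQfil : ∀ K₁ ∈ Set.range Q, ∀ K₂ ∈ Set.range Q, ∃ K₃ ∈ Set.range Q, K₃ ⊆ K₁ ∩ K₂ := by
      rintro _ ⟨i, rfl⟩ _ ⟨j, rfl⟩
      obtain ⟨k, hk⟩ := hfil i j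
      refine ⟨Q k, ⟨k, rfl⟩, ?_⟩
      have h1 : Q k ⊆ Q i := upSet_mono fun x ⟨hd, hK⟩ => ⟨hd, (hk hK).1⟩
      have h2 : Q k ⊆ Q j := upSet_mono fun x ⟨hd, hK⟩ => ⟨hd, (hk hK).2⟩
      exact Set.subset_inter h1 h2
    have hint : ⋂₀ Set.range Q = upSet Chat := by
      rw [Set.sInter_range]; exact hChat
    have hsub : ⋂₀ Set.range Q ⊆ U := by
      rw [hint]
      rintro y ⟨ch, hchChat, hchy⟩ ⟨hy1, hy2⟩
      have hya : specLE y a := hy1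
      have hya' : specLE y a' := hy2
      have h1 : specLE ch a := specLE_trans hchy hya
      have h2 : specLE ch a' := specLE_trans hchy hya'
      have e1 : ch = a := by
        by_contra h; exact hChatAnti hchChat haChat h h1
      have e2 : ch = a' := by
        by_contra h; exact hChatAnti hchChat ha'Chat h h2
      exact hne'' (e2 ▸ e1 ▸ rfl : a' = a)
    obtain ⟨S, ⟨i, rfl⟩, hSU⟩ :=
      hwf (Set.range Q) (Set.range_nonempty Q) hQcs hQfil U hUopen hsub
    -- a' ∈ Q i
    have ha'Q : a' ∈ Q i := by
      have : a' ∈ upSet Chat := mem_upSet_self ha'Chat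
      rw [← hChat] at this
      exact Set.mem_iInter.1 this i
    obtain ⟨x, ⟨hxd, hxK⟩, hxa'⟩ := ha'Q
    have hxQ : x ∈ Q i := mem_upSet_self ⟨hxd, hxK⟩
    have hxU : x ∈ U := hSU hxQ
    have hxa : specLE x a := by
      rw [downSet_singleton] at hxd; exact hxd
    exact hxU ⟨hxa, hxa'⟩
  · exact fun x hx => hx ▸ haChat
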